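/- For any two probability distributions P, Q on a finite set, any α ∈ (0,1) and λ ∈ (0,1), the Jensen–Shannon divergence satisfies JS_α(P‖Q) ≤ α·(λ(1-α)/((1-λ)α))^λ · H_{1-λ}(P‖Q), where H_s is the Hellinger divergence of order s. -/

import Mathlib

open Real BigOperators

/-- Kullback–Leibler divergence between finitely supported distributions. -/
noncomputable def KLdiv {α : Type*} [Fintype α] (P Q : α → ℝ) : ℝ :=
  ∑ x, P x * Real.log (P x / Q x)

/-- Jensen–Shannon divergence with weight `p`. -/
noncomputable def JSdiv {α : Type*} [Fintype α] (p : ℝ) (P Q : α → ℝ) : ℝ :=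
  p * KLdiv P (fun x => p * P x + (1 - p) * Q x) +
    (1 - p) * KLdiv Q (fun x => p * P x + (1 - p) * Q x)

/-- Hellinger divergence of order `s`. -/
noncomputable def Hellinger {α : Type*} [Fintype α] (s : ℝ) (P Q : α → ℝ) : ℝ :=
  (1 / (s - 1)) * ((∑ x, P x ^ s * Q x ^ (1 - s)) - 1)

/-- The constant `C = α (λ(1-α)/((1-λ)α))^λ`. -/
noncomputable def Cc (α l : ℝ) : ℝ := α * (l * (1 - α) / ((1 - l) * α)) ^ l

/-- The generator difference `h = C·g - f`. -/
noncomputable def hh (α l t : ℝ) : ℝ :=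
  Cc α l / l * (1 - t ^ (1 - l)) -
    (α * (t * Real.log t) - (α * t + (1 - α)) * Real.log (α * t + (1 - α)))

/-- The derivative of `hh`. -/
noncomputable def ph (α l t : ℝ) : ℝ :=
  -(Cc α l * (1 - l) / l) * t ^ (-l) - α * Real.log t + α * Real.log (α * t + (1 - α))

section Aux

variable {α l : ℝ}

lemma Cc_pos (hα0 : 0 < α) (hα1 : α < 1) (hl0 : 0 < l) (hl1 : l < 1) : 0 < Cc α l := by
  have h1 : 0 < l * (1 - α) / ((1 - l) * α) := by
    apply div_pos (by nlinarith) (by nlinarith)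
  exact mul_pos hα0 (Real.rpow_pos_of_pos h1 l)

/-- Core AM–GM inequality: `α(1-α) t^l ≤ C (1-l)(αt + 1-α)` for `t > 0`. -/
lemma core_ineq (hα0 : 0 < α) (hα1 : α < 1) (hl0 : 0 < l) (hl1 : l < 1)
    {t : ℝ} (ht : 0 < t) :
    α * (1 - α) * t ^ l ≤ Cc α l * (1 - l) * (α * t + (1 - α)) := by
  set s : ℝ := l * (1 - α) / ((1 - l) * α) with hs
  have hs0 : 0 < s := div_pos (by nlinarith) (by nlinarith)
  have hu0 : 0 ≤ t / s := le_of_lt (div_pos ht hs0)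
  have key : (t / s) ^ l ≤ l * (t / s) + (1 - l) := by
    have h := Real.geom_mean_le_arith_mean2_weighted hl0.le (by linarith : (0:ℝ) ≤ 1 - l)
      hu0 zero_le_one (by ring)
    simpa using h
  have hts : t ^ l = s ^ l * (t / s) ^ l := by
    rw [← Real.mul_rpow hs0.le hu0, mul_div_cancel₀ t hs0.ne']
  have h2 : α * (1 - α) * t ^ l ≤ α * (1 - α) * (s ^ l * (l * (t / s) + (1 - l))) := by
    rw [hts]
    have := mul_le_mul_of_nonneg_left key (le_of_lt (Real.rpow_pos_of_pos hs0 l))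
    nlinarith [this, mul_pos hα0 (sub_pos.mpr hα1)]
  refine h2.trans_eq ?_
  have hCc : Cc α l = α * s ^ l := rfl
  have ht' : l * (t / s) * (1 - α) = (1 - l) * (α * t) := by
    rw [hs]
    have h1l : (1:ℝ) - l ≠ 0 := by linarith
    have h1a : (1:ℝ) - α ≠ 0 := by linarith
    field_simp
  rw [hCc]
  linear_combination (α * s ^ l) * ht'
end Aux

section Deriv

variable {α l : ℝ}

lemma hasDerivAt_hh (hα0 : 0 < α) (hα1 : α < 1) {t : ℝ} (ht : 0 < t) :
    HasDerivAt (hh α l) (ph α l t) t := by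
  have hm : 0 < α * t + (1 - α) := by nlinarith
  have d1 : HasDerivAt (fun t : ℝ => t ^ (1 - l)) ((1 - l) * t ^ (-l)) t := by
    have h := Real.hasDerivAt_rpow_const (x := t) (p := 1 - l) (Or.inl ht.ne')
    convert h using 2
    ring
  have d2 : HasDerivAt (fun t : ℝ => t * Real.log t) (Real.log t + 1) t := by
    have h := (hasDerivAt_id t).mul (Real.hasDerivAt_log ht.ne')
    refine h.congr_deriv ?_
    simp [ht.ne']
  have d3 : HasDerivAt (fun t : ℝ => α * t + (1 - α)) α t := by
    simpa using ((hasDerivAt_id t).const_mul α).add_const (1 - α)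
  have d4 : HasDerivAt (fun y : ℝ => y * Real.log y)
      (Real.log (α * t + (1 - α)) + 1) (α * t + (1 - α)) := by
    have h := (hasDerivAt_id (α * t + (1 - α))).mul (Real.hasDerivAt_log hm.ne')
    refine h.congr_deriv ?_
    simp [hm.ne']
  have d5 : HasDerivAt (fun t : ℝ => (α * t + (1 - α)) * Real.log (α * t + (1 - α)))
      ((Real.log (α * t + (1 - α)) + 1) * α) t := by have := d4.comp t d3; exact this
  have dtotal := (((d1.const_sub 1).const_mul (Cc α l / l)).sub
    ((d2.const_mul α).sub d5))
  refine dtotal.congr_deriv ?_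
  unfold ph
  ring

lemma hasDerivAt_ph (hα0 : 0 < α) (hα1 : α < 1) (hl0 : 0 < l) {t : ℝ} (ht : 0 < t) :
    HasDerivAt (ph α l)
      (Cc α l * (1 - l) * t ^ (-l - 1) - α / t + α ^ 2 / (α * t + (1 - α))) t := by
  have hm : 0 < α * t + (1 - α) := by nlinarith
  have d1 : HasDerivAt (fun t : ℝ => t ^ (-l)) (-l * t ^ (-l - 1)) t :=
    Real.hasDerivAt_rpow_const (x := t) (p := -l) (Or.inl ht.ne')
  have d2 : HasDerivAt (fun t : ℝ => Real.log t) t⁻¹ t := Real.hasDerivAt_log ht.ne'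
  have d3 : HasDerivAt (fun t : ℝ => α * t + (1 - α)) α t := by
    simpa using ((hasDerivAt_id t).const_mul α).add_const (1 - α)
  have d4 : HasDerivAt (fun t : ℝ => Real.log (α * t + (1 - α)))
      ((α * t + (1 - α))⁻¹ * α) t := by have := (Real.hasDerivAt_log hm.ne').comp t d3; exact this
  have dtotal := ((d1.const_mul (-(Cc α l * (1 - l) / l))).sub
    (d2.const_mul α)).add (d4.const_mul α)
  refine dtotal.congr_deriv ?_
  field_simp

lemma ph_mono (hα0 : 0 < α) (hα1 : α < 1) (hl0 : 0 < l) (hl1 : l < 1) :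
    MonotoneOn (ph α l) (Set.Ioi (0:ℝ)) := by
  have hderiv : ∀ t ∈ Set.Ioi (0:ℝ), HasDerivAt (ph α l)
      (Cc α l * (1 - l) * t ^ (-l - 1) - α / t + α ^ 2 / (α * t + (1 - α))) t :=
    fun t ht => hasDerivAt_ph hα0 hα1 hl0 ht
  apply monotoneOn_of_deriv_nonneg (convex_Ioi 0)
  · exact fun t ht => (hderiv t ht).continuousAt.continuousWithinAt
  · rw [interior_Ioi]
    exact fun t ht => (hderiv t ht).differentiableAt.differentiableWithinAt
  · rw [interior_Ioi]
    intro t ht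
    rw [(hderiv t ht).deriv]
    -- `0 ≤ C(1-l) t^{-l-1} - α/t + α²/m`
    have htpos : (0:ℝ) < t := ht
    have hm : 0 < α * t + (1 - α) := by nlinarith
    have htl : 0 < t ^ l := Real.rpow_pos_of_pos htpos l
    have hkey := core_ineq hα0 hα1 hl0 hl1 htpos
    have hexp : t ^ (-l - 1) = (t ^ l * t)⁻¹ := by
      rw [show -l - 1 = -(l + 1) by ring, Real.rpow_neg htpos.le, Real.rpow_add htpos,
        Real.rpow_one]
    rw [hexp]
    have h1 : α / t - α ^ 2 / (α * t + (1 - α)) = α * (1 - α) / (t * (α * t + (1 - α))) := by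
      field_simp
      ring
    have h2 : α * (1 - α) / (t * (α * t + (1 - α))) ≤ Cc α l * (1 - l) / (t ^ l * t) := by
      rw [div_le_div_iff₀ (by positivity) (by positivity)]
      nlinarith [mul_le_mul_of_nonneg_right hkey htpos.le]
    rw [← div_eq_mul_inv]
    linarith

lemma ph_tendsto (hα0 : 0 < α) (hα1 : α < 1) (hl0 : 0 < l) :
    Filter.Tendsto (ph α l) Filter.atTop (nhds (α * Real.log α)) := by
  have h1 : Filter.Tendsto (fun t : ℝ => t ^ (-l)) Filter.atTop (nhds 0) :=
    tendsto_rpow_neg_atTop hl0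
  have h2 : Filter.Tendsto (fun t : ℝ => α + (1 - α) / t) Filter.atTop (nhds α) := by
    have h0 : Filter.Tendsto (fun t : ℝ => (1 - α) / t) Filter.atTop (nhds 0) := by
      simpa [div_eq_mul_inv] using (tendsto_inv_atTop_zero (𝕜 := ℝ)).const_mul (1 - α)
    simpa using h0.const_add α
  have h3 : Filter.Tendsto (fun t : ℝ => α * Real.log (α + (1 - α) / t)) Filter.atTop
      (nhds (α * Real.log α)) :=
    (((Real.continuousAt_log hα0.ne').tendsto.comp h2).const_mul α)
  have h4 : Filter.Tendsto
      (fun t : ℝ => -(Cc α l * (1 - l) / l) * t ^ (-l) + α * Real.log (α + (1 - α) / t))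
      Filter.atTop (nhds (α * Real.log α)) := by
    have := (h1.const_mul (-(Cc α l * (1 - l) / l))).add h3
    simpa using this
  refine h4.congr' ?_
  filter_upwards [Filter.eventually_gt_atTop 0] with t ht
  have hm : 0 < α * t + (1 - α) := by nlinarith
  unfold ph
  rw [show α + (1 - α) / t = (α * t + (1 - α)) / t by field_simp,
    Real.log_div hm.ne' ht.ne']
  ring

lemma ph_le (hα0 : 0 < α) (hα1 : α < 1) (hl0 : 0 < l) (hl1 : l < 1)
    {t : ℝ} (ht : 0 < t) : ph α l t ≤ α * Real.log α := by
  refine ge_of_tendsto (ph_tendsto hα0 hα1 hl0) ?_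
  filter_upwards [Filter.eventually_ge_atTop t] with y hy
  exact ph_mono hα0 hα1 hl0 hl1 ht (lt_of_lt_of_le ht hy) hy

lemma hh_cont (hl0 : 0 < l) (hl1 : l < 1) : Continuous (hh α l) := by
  have c1 : Continuous fun t : ℝ => t ^ (1 - l) :=
    Real.continuous_rpow_const (by linarith)
  have c2 : Continuous fun t : ℝ => t * Real.log t := Real.continuous_mul_log
  have c3 : Continuous fun t : ℝ => α * t + (1 - α) := by continuity
  have c4 : Continuous fun t : ℝ => (α * t + (1 - α)) * Real.log (α * t + (1 - α)) :=
    Real.continuous_mul_log.comp c3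
  unfold hh
  exact (continuous_const.mul (continuous_const.sub c1)).sub
    ((continuous_const.mul c2).sub c4)

lemma hh_convex (hα0 : 0 < α) (hα1 : α < 1) (hl0 : 0 < l) (hl1 : l < 1) :
    ConvexOn ℝ (Set.Ici (0:ℝ)) (hh α l) := by
  apply convexOn_of_hasDerivWithinAt2_nonneg (f' := ph α l)
    (f'' := fun t => Cc α l * (1 - l) * t ^ (-l - 1) - α / t + α ^ 2 / (α * t + (1 - α)))
    (convex_Ici 0) ((hh_cont hl0 hl1).continuousOn)
  · rw [interior_Ici]
    exact fun t ht => (hasDerivAt_hh hα0 hα1 ht).hasDerivWithinAt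
  · rw [interior_Ici]
    exact fun t ht => (hasDerivAt_ph hα0 hα1 hl0 ht).hasDerivWithinAt
  · rw [interior_Ici]
    intro t ht
    have htpos : (0:ℝ) < t := ht
    have hm : 0 < α * t + (1 - α) := by nlinarith
    have hkey := core_ineq hα0 hα1 hl0 hl1 htpos
    have htl : 0 < t ^ l := Real.rpow_pos_of_pos htpos l
    have hexp : t ^ (-l - 1) = (t ^ l * t)⁻¹ := by
      rw [show -l - 1 = -(l + 1) by ring, Real.rpow_neg htpos.le, Real.rpow_add htpos,
        Real.rpow_one]
    have h1 : α / t - α ^ 2 / (α * t + (1 - α)) = α * (1 - α) / (t * (α * t + (1 - α))) := by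
      field_simp
      ring
    have h2 : α * (1 - α) / (t * (α * t + (1 - α))) ≤ Cc α l * (1 - l) / (t ^ l * t) := by
      rw [div_le_div_iff₀ (by positivity) (by positivity)]
      nlinarith [mul_le_mul_of_nonneg_right hkey htpos.le]
    rw [hexp, ← div_eq_mul_inv]
    linarith

lemma hh_one : hh α l 1 = 0 := by
  unfold hh
  norm_num

lemma hh_lower (hα0 : 0 < α) (hα1 : α < 1) (hl0 : 0 < l) (hl1 : l < 1)
    {x : ℝ} (hx0 : 0 ≤ x) (hx1 : x ≤ 1) :
    α * Real.log α * (x - 1) ≤ hh α l x := by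
  have key : AntitoneOn (fun x => hh α l x - α * Real.log α * (x - 1)) (Set.Icc (0:ℝ) 1) := by
    have hderiv : ∀ t ∈ Set.Ioo (0:ℝ) 1,
        HasDerivAt (fun x => hh α l x - α * Real.log α * (x - 1))
          (ph α l t - α * Real.log α) t := by
      intro t ht
      have d1 := hasDerivAt_hh (l := l) hα0 hα1 ht.1
      have d2 : HasDerivAt (fun x : ℝ => α * Real.log α * (x - 1)) (α * Real.log α) t := by
        simpa using ((hasDerivAt_id t).sub_const 1).const_mul (α * Real.log α)
      exact d1.sub d2
    apply antitoneOn_of_deriv_nonpos (convex_Icc 0 1)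
    · exact ((hh_cont hl0 hl1).sub (by continuity)).continuousOn
    · rw [interior_Icc]
      exact fun t ht => (hderiv t ht).differentiableAt.differentiableWithinAt
    · rw [interior_Icc]
      intro t ht
      rw [(hderiv t ht).deriv]
      have := ph_le hα0 hα1 hl0 hl1 ht.1
      linarith
  have h := key (Set.mem_Icc.mpr ⟨hx0, hx1⟩) (Set.mem_Icc.mpr ⟨zero_le_one, le_refl 1⟩) hx1
  simp only [hh_one] at h
  linarith

/-- Pointwise identity on the support of `Q`. -/
lemma point_id (hα0 : 0 < α) (hα1 : α < 1) (hl0 : 0 < l) (hl1 : l < 1)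
    {p q : ℝ} (hp : 0 ≤ p) (hq : 0 < q) :
    q * hh α l (p / q) =
      Cc α l / l * (q - p ^ (1 - l) * q ^ l) -
        (α * (p * Real.log (p / (α * p + (1 - α) * q))) +
          (1 - α) * (q * Real.log (q / (α * p + (1 - α) * q)))) := by
  have hm : 0 < α * p + (1 - α) * q := by nlinarith
  have hq1l : 0 < q ^ (1 - l) := Real.rpow_pos_of_pos hq (1 - l)
  have hql : 0 < q ^ l := Real.rpow_pos_of_pos hq l
  have hA : q * (p / q) ^ (1 - l) = p ^ (1 - l) * q ^ l := by
    rw [Real.div_rpow hp hq.le]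
    have hqq : q ^ l * q ^ (1 - l) = q := by
      rw [← Real.rpow_add hq]
      norm_num
    field_simp
    rw [mul_assoc, mul_comm (q ^ (1 - l)), hqq, mul_comm]
  have hmq : α * (p / q) + (1 - α) = (α * p + (1 - α) * q) / q := by
    field_simp
  have hB : q * (α * (p / q * Real.log (p / q)) -
      (α * (p / q) + (1 - α)) * Real.log (α * (p / q) + (1 - α))) =
      α * (p * Real.log (p / (α * p + (1 - α) * q))) +
        (1 - α) * (q * Real.log (q / (α * p + (1 - α) * q))) := by
    rw [hmq]
    rcases eq_or_lt_of_le hp with hp0 | hp0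
    · rw [← hp0]
      have hmm : α * 0 + (1 - α) * q = (1 - α) * q := by ring
      rw [hmm]
      have h1 : ((1 - α) * q) / q = (1 - α) := by field_simp
      have h2 : q / ((1 - α) * q) = (1 - α)⁻¹ := by
        rw [show (1 - α) * q = q * (1 - α) by ring, ← div_div, div_self hq.ne', one_div]
      simp only [zero_div, mul_zero, zero_mul, Real.log_zero, h1, h2, Real.log_inv]
      ring
    · have hlogpq : Real.log (p / q) = Real.log p - Real.log q := Real.log_div hp0.ne' hq.ne'
      have hlogmq : Real.log ((α * p + (1 - α) * q) / q) =
        Real.log (α * p + (1 - α) * q) - Real.log q := Real.log_div hm.ne' hq.ne'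
      have hlogpm : Real.log (p / (α * p + (1 - α) * q)) =
        Real.log p - Real.log (α * p + (1 - α) * q) := Real.log_div hp0.ne' hm.ne'
      have hlogqm : Real.log (q / (α * p + (1 - α) * q)) =
        Real.log q - Real.log (α * p + (1 - α) * q) := Real.log_div hq.ne' hm.ne'
      rw [hlogpq, hlogmq, hlogpm, hlogqm]
      field_simp
      ring
  unfold hh
  rw [mul_sub, hB]
  linear_combination (-(Cc α l / l)) * hA

end Deriv

/-- `JS_α(P‖Q) ≤ α·(λ(1-α)/((1-λ)α))^λ · H_{1-λ}(P‖Q)` for `α, λ ∈ (0,1)`. -/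
theorem stmt_8 {X : Type*} [Fintype X] (P Q : X → ℝ) (α l : ℝ)
    (hP0 : ∀ x, 0 ≤ P x) (hQ0 : ∀ x, 0 ≤ Q x)
    (hP1 : ∑ x, P x = 1) (hQ1 : ∑ x, Q x = 1)
    (hα : α ∈ Set.Ioo (0:ℝ) 1) (hl : l ∈ Set.Ioo (0:ℝ) 1) :
    JSdiv α P Q ≤ α * (l * (1 - α) / ((1 - l) * α)) ^ l * Hellinger (1 - l) P Q := by
  classical
  obtain ⟨hα0, hα1⟩ := hα
  obtain ⟨hl0, hl1⟩ := hl
  have hlne : l ≠ 0 := hl0.ne'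
  rw [show α * (l * (1 - α) / ((1 - l) * α)) ^ l = Cc α l from rfl]
  set A : Finset X := Finset.univ.filter (fun x => 0 < Q x) with hA
  set S : ℝ := ∑ x ∈ A, P x with hS
  have hmemA : ∀ x, x ∈ A ↔ 0 < Q x := by
    intro x
    simp [hA]
  have hQz : ∀ x, x ∉ A → Q x = 0 := by
    intro x hx
    have := (hmemA x).not.mp hx
    exact le_antisymm (not_lt.mp this) (hQ0 x)
  have hQA1 : ∑ x ∈ A, Q x = 1 := by
    rw [Finset.sum_subset A.subset_univ (fun x _ hx => hQz x hx)]
    exact hQ1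
  have hS0 : 0 ≤ S := Finset.sum_nonneg fun x _ => hP0 x
  have hS1 : S ≤ 1 := by
    rw [← hP1]
    exact Finset.sum_le_sum_of_subset_of_nonneg A.subset_univ fun x _ _ => hP0 x
  have hT : ∑ x ∈ Aᶜ, P x = 1 - S := by
    have := Finset.sum_add_sum_compl A P
    rw [hP1] at this
    linarith
  have hell : Cc α l * Hellinger (1 - l) P Q
      = ∑ x, Cc α l / l * (Q x - P x ^ (1 - l) * Q x ^ l) := by
    unfold Hellinger
    rw [show (1:ℝ) - (1 - l) = l by ring]
    have h2 : ∑ x, Cc α l / l * (Q x - P x ^ (1 - l) * Q x ^ l)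
        = Cc α l / l * ((∑ x, Q x) - ∑ x, P x ^ (1 - l) * Q x ^ l) := by
      rw [← Finset.sum_sub_distrib, Finset.mul_sum]
    rw [h2, hQ1, show (1:ℝ) - l - 1 = -l by ring]
    field_simp
    ring
  have hjs : JSdiv α P Q = ∑ x, (α * (P x * Real.log (P x / (α * P x + (1 - α) * Q x)))
      + (1 - α) * (Q x * Real.log (Q x / (α * P x + (1 - α) * Q x)))) := by
    simp only [JSdiv, KLdiv]
    rw [Finset.mul_sum, Finset.mul_sum, ← Finset.sum_add_distrib]
  have hmain : Cc α l * Hellinger (1 - l) P Q - JSdiv α P Q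
      = (∑ x ∈ A, Q x * hh α l (P x / Q x)) + α * Real.log α * (1 - S) := by
    rw [hell, hjs, ← Finset.sum_sub_distrib, ← Finset.sum_add_sum_compl A]
    congr 1
    · apply Finset.sum_congr rfl
      intro x hx
      exact (point_id hα0 hα1 hl0 hl1 (hP0 x) ((hmemA x).mp hx)).symm
    · rw [← hT, Finset.mul_sum]
      apply Finset.sum_congr rfl
      intro x hx
      have hq0 : Q x = 0 := hQz x (Finset.mem_compl.mp hx)
      rw [hq0]
      rcases eq_or_lt_of_le (hP0 x) with hp0 | hp0
      · simp [← hp0, Real.zero_rpow hlne, Real.zero_rpow (show (1:ℝ) - l ≠ 0 from sub_ne_zero.mpr (by linarith))]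
      · have hpm : P x / (α * P x + (1 - α) * 0) = α⁻¹ := by
          rw [mul_zero, add_zero, show α * P x = P x * α by ring, ← div_div,
            div_self hp0.ne', one_div]
        rw [hpm]
        simp [Real.zero_rpow hl0.ne', Real.log_inv]
        ring
  have hjen : hh α l S ≤ ∑ x ∈ A, Q x * hh α l (P x / Q x) := by
    have hmem : ∀ x ∈ A, P x / Q x ∈ Set.Ici (0:ℝ) :=
      fun x hx => Set.mem_Ici.mpr (div_nonneg (hP0 x) (hQ0 x))
    have h := (hh_convex hα0 hα1 hl0 hl1).map_sum_le (t := A) (w := Q)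
      (p := fun x => P x / Q x) (fun x _ => hQ0 x) hQA1 hmem
    have heq : ∑ x ∈ A, Q x • (P x / Q x) = S := by
      rw [hS]
      apply Finset.sum_congr rfl
      intro x hx
      have hqx : Q x ≠ 0 := ((hmemA x).mp hx).ne'
      rw [smul_eq_mul, mul_comm, div_mul_cancel₀ _ hqx]
    rw [heq] at h
    simpa [smul_eq_mul] using h
  have hlow := hh_lower hα0 hα1 hl0 hl1 hS0 hS1
  have hz : α * Real.log α * (S - 1) + α * Real.log α * (1 - S) = 0 := by ring
  linarith [hmain, hjen, hlow, hz]
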